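/- Green's function bounds for the 1D band model (first part of Lemma B.1): Fix integers W ≥ 1 and r ≥ 1, fix ξ ∈ ℤ, and let B_r(ξ) = { x ∈ ℤ : |x−ξ| ≤ rW }. Define the matrix −Δ_W^{B_r} on ℝ^{B_r(ξ)} by (−Δ_W^{B_r} f)(x) = 2W·f(x) − Σ_{y∈B_r(ξ): 0<|x−y|≤W} f(y). Then −Δ_W^{B_r} is symmetric positive definite, and its inverse G_r = (−Δ_W^{B_r})^{-1} satisfies, for every x ∈ B_r(ξ): (1/(2W³))·(rW + 1 − |x−ξ|) ≤ G_r(ξ,x) ≤ (1/W²)·(W + rW − |x−ξ|). -/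

import Mathlib

namespace Band1D

/-- The ball `B_r(ξ) = {x : |x - ξ| ≤ rW}` in the band graph `Γ_{1,W}`. -/
noncomputable def bandBall (ξ : ℤ) (r W : ℕ) : Finset ℤ :=
  Finset.Icc (ξ - (r * W : ℕ)) (ξ + (r * W : ℕ))

/-- The (negative) Dirichlet Laplacian `-Δ_W^{B_r}` of the 1D band graph on `B_r(ξ)`,
as a matrix: `2W` on the diagonal and `-1` at `(x,y)` with `0 < |x-y| ≤ W`. -/
def bandMat (ξ : ℤ) (r W : ℕ) : Matrix (bandBall ξ r W) (bandBall ξ r W) ℝ :=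
  fun x y =>
    (if (x : ℤ) = (y : ℤ) then (2 * W : ℝ) else 0) -
      (if 0 < |(x : ℤ) - (y : ℤ)| ∧ |(x : ℤ) - (y : ℤ)| ≤ (W : ℤ) then 1 else 0)

/-- The center `ξ` as an element of `B_r(ξ)`. -/
def bandCtr (ξ : ℤ) (r W : ℕ) : (bandBall ξ r W : Finset ℤ) :=
  ⟨ξ, by simp only [bandBall, Finset.mem_Icc]; omega⟩


lemma absD (z d : ℤ) (hd : 0 ≤ d) : |z+d| + |z-d| = 2*|z| + 2*((d - |z|).toNat : ℤ) := by
  rw [Int.abs_eq_natAbs, Int.abs_eq_natAbs, Int.abs_eq_natAbs]; omega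

lemma icc_insert_top (W : ℕ) : Finset.Icc (1:ℤ) ((W:ℤ)+1) = insert ((W:ℤ)+1) (Finset.Icc 1 (W:ℤ)) := by
  ext y; simp [Finset.mem_Icc]; omega

lemma gaussZ (W : ℕ) : (∑ d ∈ Finset.Icc (1:ℤ) (W:ℤ), d) * 2 = (W:ℤ) * ((W:ℤ)+1) := by
  induction W with
  | zero => simp
  | succ W ih =>
    have h : ((W+1:ℕ):ℤ) = (W:ℤ)+1 := by push_cast; ring
    rw [h, icc_insert_top, Finset.sum_insert (by simp)]
    push_cast
    nlinarith [ih]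

lemma sum_window (W : ℕ) (x : ℤ) (F : ℤ → ℝ) :
    ∑ y ∈ (Finset.Icc (x - (W:ℤ)) (x + (W:ℤ))).erase x, F y
      = ∑ d ∈ Finset.Icc (1:ℤ) (W:ℤ), (F (x + d) + F (x - d)) := by
  induction W with
  | zero => simp
  | succ W ih =>
    have h : ((W+1:ℕ):ℤ) = (W:ℤ)+1 := by push_cast; ring
    have hwin : Finset.Icc (x - ((W:ℤ)+1)) (x + ((W:ℤ)+1))
        = insert (x - ((W:ℤ)+1)) (insert (x + ((W:ℤ)+1)) (Finset.Icc (x - (W:ℤ)) (x + (W:ℤ)))) := by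
      ext y; simp [Finset.mem_Icc, Finset.mem_insert]; omega
    rw [h, hwin]
    have h1 : x - ((W:ℤ)+1) ≠ x := by omega
    have h2 : x + ((W:ℤ)+1) ≠ x := by omega
    rw [Finset.erase_insert_of_ne h1, Finset.erase_insert_of_ne h2]
    rw [Finset.sum_insert (by simp only [Finset.mem_insert, Finset.mem_erase, Finset.mem_Icc]; omega),
        Finset.sum_insert (by simp only [Finset.mem_insert, Finset.mem_erase, Finset.mem_Icc]; omega)]
    rw [ih, icc_insert_top, Finset.sum_insert (by simp)]
    ring


lemma mem_ball_iff {ξ:ℤ}{r W:ℕ}{y:ℤ} :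
    y ∈ bandBall ξ r W ↔ ξ - (r*W:ℕ) ≤ y ∧ y ≤ ξ + (r*W:ℕ) := by
  simp [bandBall, Finset.mem_Icc]

lemma mulVec_core (ξ : ℤ) (r W : ℕ) (F : ℤ → ℝ) (hF : ∀ y, y ∉ bandBall ξ r W → F y = 0)
    (x : (bandBall ξ r W : Finset ℤ)) :
    (bandMat ξ r W).mulVec (fun y => F ↑y) x
      = 2*(W:ℝ) * F ↑x - ∑ d ∈ Finset.Icc (1:ℤ) (W:ℤ), (F (↑x + d) + F (↑x - d)) := by
  have hx := x.2
  show (∑ y : (bandBall ξ r W : Finset ℤ),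
      ((if ((x:ℤ)) = ((y:ℤ)) then (2*(W:ℕ):ℝ) else 0)
        - (if 0 < |(x:ℤ) - (y:ℤ)| ∧ |(x:ℤ) - (y:ℤ)| ≤ (W:ℤ) then 1 else 0)) * F ↑y) = _
  have hrw : (∑ y : (bandBall ξ r W : Finset ℤ),
      ((if ((x:ℤ)) = ((y:ℤ)) then (2*(W:ℕ):ℝ) else 0)
        - (if 0 < |(x:ℤ) - (y:ℤ)| ∧ |(x:ℤ) - (y:ℤ)| ≤ (W:ℤ) then 1 else 0)) * F ↑y)
      = ∑ y ∈ bandBall ξ r W,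
      ((if ((x:ℤ)) = y then (2*(W:ℕ):ℝ) else 0)
        - (if 0 < |(x:ℤ) - y| ∧ |(x:ℤ) - y| ≤ (W:ℤ) then 1 else 0)) * F y :=
    Finset.sum_coe_sort (bandBall ξ r W) (fun y =>
      ((if ((x:ℤ)) = y then (2*(W:ℕ):ℝ) else 0)
        - (if 0 < |(x:ℤ) - y| ∧ |(x:ℤ) - y| ≤ (W:ℤ) then 1 else 0)) * F y)
  rw [hrw]
  have hsplit : ∀ y ∈ bandBall ξ r W,
      ((if ((x:ℤ)) = y then (2*(W:ℕ):ℝ) else 0)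
        - (if 0 < |(x:ℤ) - y| ∧ |(x:ℤ) - y| ≤ (W:ℤ) then 1 else 0)) * F y
      = (if ((x:ℤ)) = y then (2*(W:ℝ)) * F y else 0)
        - (if 0 < |(x:ℤ) - y| ∧ |(x:ℤ) - y| ≤ (W:ℤ) then F y else 0) := by
    intro y _
    split_ifs <;> push_cast <;> ring
  rw [Finset.sum_congr rfl hsplit, Finset.sum_sub_distrib, Finset.sum_ite_eq, if_pos hx]
  congr 1
  rw [← Finset.sum_filter]
  have hset : (bandBall ξ r W).filter (fun y => 0 < |(x:ℤ) - y| ∧ |(x:ℤ) - y| ≤ (W:ℤ))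
      = ((Finset.Icc ((x:ℤ) - (W:ℤ)) ((x:ℤ) + (W:ℤ))).erase (x:ℤ)).filter
          (fun y => y ∈ bandBall ξ r W) := by
    ext y
    simp only [Finset.mem_filter, Finset.mem_erase, Finset.mem_Icc, mem_ball_iff,
      Int.abs_eq_natAbs]
    omega
  rw [hset]
  have hsub : ∑ y ∈ ((Finset.Icc ((x:ℤ) - (W:ℤ)) ((x:ℤ) + (W:ℤ))).erase (x:ℤ)).filter
          (fun y => y ∈ bandBall ξ r W), F y
      = ∑ y ∈ (Finset.Icc ((x:ℤ) - (W:ℤ)) ((x:ℤ) + (W:ℤ))).erase (x:ℤ), F y := by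
    apply Finset.sum_subset (Finset.filter_subset _ _)
    intro y hy hny
    exact hF y (by simpa [Finset.mem_filter, hy] using hny)
  rw [hsub, sum_window]



/-- Extension of a vector on the ball by zero to all of `ℤ`. -/
noncomputable def extFun (ξ:ℤ) (r W:ℕ) (w : ↥(bandBall ξ r W) → ℝ) : ℤ → ℝ :=
  fun y => if h : y ∈ bandBall ξ r W then w ⟨y,h⟩ else 0

lemma extFun_mem (ξ:ℤ) (r W:ℕ) (w : ↥(bandBall ξ r W) → ℝ) (y : ℤ)
    (h : y ∈ bandBall ξ r W) : extFun ξ r W w y = w ⟨y,h⟩ := dif_pos h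

lemma extFun_not_mem (ξ:ℤ) (r W:ℕ) (w : ↥(bandBall ξ r W) → ℝ) (y : ℤ)
    (h : y ∉ bandBall ξ r W) : extFun ξ r W w y = 0 := dif_neg h

lemma extFun_coe (ξ:ℤ) (r W:ℕ) (w : ↥(bandBall ξ r W) → ℝ) :
    w = fun y : ↥(bandBall ξ r W) => extFun ξ r W w ↑y := by
  funext y; rw [extFun_mem ξ r W w _ y.2]

lemma bandMat_symm (ξ:ℤ) (r W:ℕ) (p q : (bandBall ξ r W : Finset ℤ)) :
    bandMat ξ r W p q = bandMat ξ r W q p := by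
  unfold bandMat
  rw [abs_sub_comm ((p:ℤ)) ((q:ℤ))]
  congr 1
  by_cases h : (p:ℤ) = (q:ℤ)
  · rw [if_pos h, if_pos h.symm]
  · rw [if_neg h, if_neg (fun hh => h hh.symm)]

lemma bandMat_isHermitian (ξ:ℤ) (r W:ℕ) : (bandMat ξ r W).IsHermitian := by
  ext p q
  simp only [Matrix.conjTranspose_apply, star_trivial]
  exact bandMat_symm ξ r W q p

lemma maximum_principle (ξ:ℤ) (r W:ℕ) (hW : 1 ≤ W) (w : ↥(bandBall ξ r W) → ℝ)
    (hw : ∀ x, 0 ≤ (bandMat ξ r W).mulVec w x) : ∀ x, 0 ≤ w x := by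
  classical
  obtain ⟨xm, _, hmin⟩ := Finset.exists_min_image Finset.univ w
    ⟨bandCtr ξ r W, Finset.mem_univ _⟩
  by_cases hm : 0 ≤ w xm
  · intro x; exact le_trans hm (hmin x (Finset.mem_univ _))
  push_neg at hm
  exfalso
  set S := Finset.univ.filter (fun y : ↥(bandBall ξ r W) => w y = w xm) with hSdef
  obtain ⟨x₀, hx₀S, hmax⟩ := Finset.exists_max_image S (fun y => (y:ℤ))
    ⟨xm, by simp [hSdef]⟩
  have hx₀ : w x₀ = w xm := (Finset.mem_filter.1 hx₀S).2
  have h0 := hw x₀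
  rw [extFun_coe ξ r W w,
    mulVec_core ξ r W (extFun ξ r W w) (fun y hy => extFun_not_mem ξ r W w y hy)] at h0
  have hFwx₀ : extFun ξ r W w (x₀:ℤ) = w xm := by
    rw [extFun_mem ξ r W w _ x₀.2]; simpa using hx₀
  have hterm : ∀ y : ℤ, w xm ≤ extFun ξ r W w y := by
    intro y; by_cases h : y ∈ bandBall ξ r W
    · rw [extFun_mem ξ r W w y h]; exact hmin _ (Finset.mem_univ _)
    · rw [extFun_not_mem ξ r W w y h]; exact le_of_lt hm
  have hcards : (Finset.Icc (1:ℤ) (W:ℤ)).card = W := by rw [Int.card_Icc]; omega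
  have hkey : extFun ξ r W w ((x₀:ℤ)+1) = w xm := by
    by_contra hne
    have hgt : w xm < extFun ξ r W w ((x₀:ℤ)+1) := lt_of_le_of_ne (hterm _) (Ne.symm hne)
    have hlt : ∑ _d ∈ Finset.Icc (1:ℤ) (W:ℤ), (2*(w xm))
        < ∑ d ∈ Finset.Icc (1:ℤ) (W:ℤ),
            (extFun ξ r W w ((x₀:ℤ)+d) + extFun ξ r W w ((x₀:ℤ)-d)) := by
      apply Finset.sum_lt_sum
      · intro i _; linarith [hterm ((x₀:ℤ)+i), hterm ((x₀:ℤ)-i)]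
      · refine ⟨1, by simp [Finset.mem_Icc]; exact_mod_cast hW, ?_⟩
        linarith [hterm ((x₀:ℤ)-1)]
    rw [Finset.sum_const, hcards, nsmul_eq_mul] at hlt
    rw [hFwx₀] at h0
    linarith
  by_cases hB : ((x₀:ℤ)+1) ∈ bandBall ξ r W
  · have hw1 : w ⟨(x₀:ℤ)+1, hB⟩ = w xm := by rw [← extFun_mem ξ r W w _ hB]; exact hkey
    have hS1 : (⟨(x₀:ℤ)+1, hB⟩ : ↥(bandBall ξ r W)) ∈ S := by
      simp [hSdef, hw1]
    have hle := hmax _ hS1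
    simp only at hle
    omega
  · rw [extFun_not_mem ξ r W w _ hB] at hkey; linarith


lemma shift_reindex (a b d : ℤ) (G : ℤ → ℝ) :
    ∑ x ∈ Finset.Icc a b, G (x + d) = ∑ y ∈ Finset.Icc (a+d) (b+d), G y := by
  rw [← Finset.map_add_right_Icc a b d, Finset.sum_map]
  rfl

lemma form_pos (ξ:ℤ) (r W:ℕ) (hW : 1 ≤ W) (hr : 1 ≤ r) (F : ℤ → ℝ)
    (hsupp : ∀ y, y ∉ bandBall ξ r W → F y = 0)
    (hne : ∃ y, F y ≠ 0) :
    0 < ∑ x ∈ bandBall ξ r W, F x *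
        (2*(W:ℝ)*F x - ∑ d ∈ Finset.Icc (1:ℤ) (W:ℤ), (F (x+d) + F (x-d))) := by
  classical
  set a := ξ - ((r*W:ℕ):ℤ) with ha
  set b := ξ + ((r*W:ℕ):ℤ) with hb
  have hBa : bandBall ξ r W = Finset.Icc a b := rfl
  have hab : a ≤ b := by omega
  have hsupp' : ∀ y, (y < a ∨ b < y) → F y = 0 := by
    intro y hy; exact hsupp y (by rw [hBa]; simp only [Finset.mem_Icc]; omega)
  have hcards : (Finset.Icc (1:ℤ) (W:ℤ)).card = W := by rw [Int.card_Icc]; omega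
  set Q := ∑ x ∈ Finset.Icc a b, F x ^ 2 with hQ
  set P : ℤ → ℝ := fun d => ∑ x ∈ Finset.Icc a b, F x * F (x + d) with hP
  set R : ℤ → ℝ := fun d => ∑ x ∈ Finset.Icc a b, F (x + d) ^ 2 with hR
  set S : ℤ → ℝ := fun d => ∑ x ∈ Finset.Icc a b, (F x - F (x + d)) ^ 2 with hS
  -- swap lemma
  have hswap : ∀ d ∈ Finset.Icc (1:ℤ) (W:ℤ),
      ∑ x ∈ Finset.Icc a b, F x * F (x - d) = P d := by
    intro d hd
    rw [Finset.mem_Icc] at hd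
    have h1 : ∑ x ∈ Finset.Icc a b, F x * F (x - d)
        = ∑ x ∈ Finset.Icc (a-d) (b-d), F (x+d) * F x := by
      have h := shift_reindex (a-d) (b-d) d (fun y => F y * F (y - d))
      simp only [add_sub_cancel_right] at h
      have hia : a - d + d = a := by ring
      have hib : b - d + d = b := by ring
      rw [hia, hib] at h
      exact h.symm
    rw [h1]
    have h2 : ∑ x ∈ Finset.Icc (a-d) (b-d), F (x+d) * F x
        = ∑ x ∈ Finset.Icc (a-d) b, F (x+d) * F x := by
      apply Finset.sum_subset
      · apply Finset.Icc_subset_Icc_right; omega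
      · intro x hx hnx
        simp only [Finset.mem_Icc] at hx hnx
        have hz : F (x + d) = 0 := hsupp' _ (by omega)
        rw [hz, zero_mul]
    have h3 : P d = ∑ x ∈ Finset.Icc (a-d) b, F (x+d) * F x := by
      rw [hP]
      simp only
      rw [Finset.sum_congr rfl (fun x _ => mul_comm (F x) (F (x+d)))]
      apply Finset.sum_subset
      · apply Finset.Icc_subset_Icc_left; omega
      · intro x hx hnx
        simp only [Finset.mem_Icc] at hx hnx
        have hz : F x = 0 := hsupp' _ (by omega)
        rw [hz, mul_zero]
    rw [h2, ← h3]
  -- shift square bound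
  have hsq : ∀ d ∈ Finset.Icc (1:ℤ) (W:ℤ), R d ≤ Q - F a ^ 2 := by
    intro d hd
    rw [Finset.mem_Icc] at hd
    have h1 : R d = ∑ y ∈ Finset.Icc (a+d) (b+d), F y ^ 2 :=
      shift_reindex a b d (fun y => F y ^ 2)
    have h2 : ∑ y ∈ Finset.Icc (a+d) (b+d), F y^2 = ∑ y ∈ Finset.Icc (a+d) b, F y^2 := by
      symm
      apply Finset.sum_subset
      · apply Finset.Icc_subset_Icc_right; omega
      · intro x hx hnx
        simp only [Finset.mem_Icc] at hx hnx
        have hz : F x = 0 := hsupp' _ (by omega)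
        rw [hz]; ring
    have h3 : ∑ y ∈ Finset.Icc (a+d) b, F y^2 ≤ ∑ y ∈ (Finset.Icc a b).erase a, F y^2 := by
      apply Finset.sum_le_sum_of_subset_of_nonneg
      · intro y hy
        simp only [Finset.mem_Icc] at hy
        simp only [Finset.mem_erase, Finset.mem_Icc]
        omega
      · intro y _ _; positivity
    rw [Finset.sum_erase_eq_sub
      (by simp only [Finset.mem_Icc]; omega : a ∈ Finset.Icc a b)] at h3
    rw [h1, h2]
    exact h3
  -- expansion of squares
  have hSd : ∀ d : ℤ, S d = Q - 2 * P d + R d := by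
    intro d
    rw [hS]
    simp only
    have h : ∀ x ∈ Finset.Icc a b, (F x - F (x+d))^2
        = F x ^ 2 - F x * F (x+d) * 2 + F (x+d)^2 := fun x _ => by ring
    rw [Finset.sum_congr rfl h, Finset.sum_add_distrib, Finset.sum_sub_distrib,
      ← Finset.sum_mul]
    rw [hQ, hP, hR]
    ring
  -- main identity
  have hform : ∑ x ∈ bandBall ξ r W, F x *
        (2*(W:ℝ)*F x - ∑ d ∈ Finset.Icc (1:ℤ) (W:ℤ), (F (x+d) + F (x-d)))
      = ∑ d ∈ Finset.Icc (1:ℤ) (W:ℤ), (S d + (Q - R d)) := by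
    rw [hBa]
    have e1 : ∀ x ∈ Finset.Icc a b, F x *
        (2*(W:ℝ)*F x - ∑ d ∈ Finset.Icc (1:ℤ) (W:ℤ), (F (x+d) + F (x-d)))
        = 2*(W:ℝ)*F x^2 - ∑ d ∈ Finset.Icc (1:ℤ) (W:ℤ), (F x * F (x+d) + F x * F (x-d)) := by
      intro x _
      rw [mul_sub, Finset.mul_sum]
      congr 1
      · ring
      · exact Finset.sum_congr rfl (fun d _ => by ring)
    have e2 : ∀ d ∈ Finset.Icc (1:ℤ) (W:ℤ),
        ∑ x ∈ Finset.Icc a b, (F x * F (x+d) + F x * F (x-d)) = P d + P d := by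
      intro d hd
      rw [Finset.sum_add_distrib, hswap d hd, hP]
    have e3 : ∀ d ∈ Finset.Icc (1:ℤ) (W:ℤ), S d + (Q - R d) = 2 * Q - (P d + P d) := by
      intro d _
      rw [hSd d]; ring
    rw [Finset.sum_congr rfl e1, Finset.sum_sub_distrib, Finset.sum_comm,
        Finset.sum_congr rfl e2, Finset.sum_congr rfl e3, Finset.sum_sub_distrib]
    congr 1
    rw [Finset.sum_const, hcards, nsmul_eq_mul, hQ, Finset.mul_sum, Finset.mul_sum]
    exact Finset.sum_congr rfl (fun x _ => by ring)
  rw [hform]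
  have hSnn : ∀ d : ℤ, 0 ≤ S d := by
    intro d
    rw [hS]
    exact Finset.sum_nonneg (fun x _ => sq_nonneg _)
  have hterm_nonneg : ∀ d ∈ Finset.Icc (1:ℤ) (W:ℤ), 0 ≤ S d + (Q - R d) := by
    intro d hd
    have h2 := hsq d hd
    have h3 : 0 ≤ F a ^ 2 := sq_nonneg _
    linarith [hSnn d]
  have h1W : (1:ℤ) ∈ Finset.Icc (1:ℤ) (W:ℤ) := by
    simp only [Finset.mem_Icc]
    exact ⟨le_refl _, by exact_mod_cast hW⟩
  have hge := Finset.single_le_sum hterm_nonneg h1W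
  have hkey : 0 < S 1 + (Q - R 1) := by
    by_contra hc
    push_neg at hc
    have h2 := hsq 1 h1W
    have h3 : 0 ≤ F a ^ 2 := sq_nonneg _
    have hS1 : S 1 = 0 := le_antisymm (by linarith [hSnn 1]) (hSnn 1)
    have hFa : F a = 0 := by
      have : F a ^ 2 = 0 := le_antisymm (by linarith [hSnn 1]) h3
      exact pow_eq_zero_iff (by norm_num) |>.1 this
    have heq : ∀ x ∈ Finset.Icc a b, F x = F (x + 1) := by
      intro x hx
      have h0 : (F x - F (x+1))^2 = 0 := by
        have := (Finset.sum_eq_zero_iff_of_nonneg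
          (fun y (_ : y ∈ Finset.Icc a b) => sq_nonneg (F y - F (y+1)))).1 ?_ x hx
        · exact this
        · rw [hS] at hS1; exact hS1
      have := pow_eq_zero_iff (two_ne_zero) |>.1 h0
      linarith [this]
    have hzero : ∀ k : ℕ, F (a + (k:ℤ)) = 0 := by
      intro k
      induction k with
      | zero => simpa using hFa
      | succ k ih =>
        by_cases hk : a + (k:ℤ) ≤ b
        · have hmem : (a + (k:ℤ)) ∈ Finset.Icc a b := by
            simp only [Finset.mem_Icc]; omega
          have hstep := heq _ hmem
          have harg : a + ((k:ℤ)+1) = (a + (k:ℤ)) + 1 := by ring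
          push_cast
          rw [harg, ← hstep]
          exact ih
        · apply hsupp'
          right
          push_cast
          omega
    obtain ⟨y, hy⟩ := hne
    apply hy
    rcases lt_or_ge y a with h | h
    · exact hsupp' y (Or.inl h)
    · have htn : ((y - a).toNat : ℤ) = y - a := Int.toNat_of_nonneg (by omega)
      have := hzero (y - a).toNat
      rw [htn] at this
      simpa using this
  exact lt_of_lt_of_le hkey hge


lemma bandMat_posDef (ξ:ℤ) (r W:ℕ) (hW : 1 ≤ W) (hr : 1 ≤ r) :
    (bandMat ξ r W).PosDef := by
  refine Matrix.PosDef.of_dotProduct_mulVec_pos (bandMat_isHermitian ξ r W) ?_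
  intro f hf
  have hstar : star f = f := by
    funext y; simp
  rw [hstar]
  have hmv : (bandMat ξ r W).mulVec f
      = fun x : ↥(bandBall ξ r W) => 2*(W:ℝ) * extFun ξ r W f ↑x
          - ∑ d ∈ Finset.Icc (1:ℤ) (W:ℤ),
              (extFun ξ r W f (↑x+d) + extFun ξ r W f (↑x-d)) := by
    funext x
    conv_lhs => rw [extFun_coe ξ r W f]
    exact mulVec_core ξ r W (extFun ξ r W f) (fun y hy => extFun_not_mem ξ r W f y hy) x
  rw [hmv]
  have hdp : (dotProduct f (fun x : ↥(bandBall ξ r W) => 2*(W:ℝ) * extFun ξ r W f ↑x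
          - ∑ d ∈ Finset.Icc (1:ℤ) (W:ℤ),
              (extFun ξ r W f (↑x+d) + extFun ξ r W f (↑x-d))))
      = ∑ x ∈ bandBall ξ r W, extFun ξ r W f x *
          (2*(W:ℝ) * extFun ξ r W f x - ∑ d ∈ Finset.Icc (1:ℤ) (W:ℤ),
              (extFun ξ r W f (x+d) + extFun ξ r W f (x-d))) := by
    rw [← Finset.sum_coe_sort (bandBall ξ r W) (fun y => extFun ξ r W f y *
          (2*(W:ℝ) * extFun ξ r W f y - ∑ d ∈ Finset.Icc (1:ℤ) (W:ℤ),
              (extFun ξ r W f (y+d) + extFun ξ r W f (y-d))))]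
    apply Finset.sum_congr rfl
    intro x _
    simp only [extFun_mem ξ r W f _ x.2, Subtype.coe_eta]
  rw [hdp]
  apply form_pos ξ r W hW hr _ (fun y hy => extFun_not_mem ξ r W f y hy)
  have : ∃ x : ↥(bandBall ξ r W), f x ≠ 0 := by
    by_contra hc
    push_neg at hc
    exact hf (funext hc)
  obtain ⟨x, hx⟩ := this
  refine ⟨(x:ℤ), ?_⟩
  rw [extFun_mem ξ r W f _ x.2]
  simpa using hx


lemma sumD (W : ℕ) (z : ℤ) :
    ∑ d ∈ Finset.Icc (1:ℤ) (W:ℤ), (|z+d| + |z-d| - 2*|z|)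
      = 2 * ∑ d ∈ Finset.Icc (1:ℤ) (W:ℤ), ((d - |z|).toNat : ℤ) := by
  rw [Finset.mul_sum]
  apply Finset.sum_congr rfl
  intro d hd
  rw [Finset.mem_Icc] at hd
  have h := absD z d (by omega)
  omega

lemma sumT_center (W : ℕ) :
    2 * ∑ d ∈ Finset.Icc (1:ℤ) (W:ℤ), (d.toNat : ℤ) = (W:ℤ) * ((W:ℤ)+1) := by
  have h : ∀ d ∈ Finset.Icc (1:ℤ) (W:ℤ), (d.toNat : ℤ) = d := by
    intro d hd
    rw [Finset.mem_Icc] at hd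
    omega
  rw [Finset.sum_congr rfl h, mul_comm]
  exact gaussZ W

lemma sumT_le (W : ℕ) (k : ℤ) (hk : 1 ≤ k) :
    2 * ∑ d ∈ Finset.Icc (1:ℤ) (W:ℤ), ((d - k).toNat : ℤ) ≤ (W:ℤ)^2 - W := by
  have h1 : ∀ d ∈ Finset.Icc (1:ℤ) (W:ℤ), ((d - k).toNat : ℤ) ≤ d - 1 := by
    intro d hd
    rw [Finset.mem_Icc] at hd
    omega
  have h2 := Finset.sum_le_sum h1
  have h3 : ∑ d ∈ Finset.Icc (1:ℤ) (W:ℤ), (d - 1)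
      = ∑ d ∈ Finset.Icc (1:ℤ) (W:ℤ), d - (W:ℤ) := by
    rw [Finset.sum_sub_distrib, Finset.sum_const, Int.card_Icc]
    simp
  have h4 := gaussZ W
  nlinarith
lemma sumT_zero (W : ℕ) (k : ℤ) (hk : (W:ℤ) < k) :
    ∑ d ∈ Finset.Icc (1:ℤ) (W:ℤ), ((d - k).toNat : ℤ) = 0 := by
  apply Finset.sum_eq_zero
  intro d hd
  rw [Finset.mem_Icc] at hd
  omega

lemma sumT_nonneg (W : ℕ) (k : ℤ) :
    0 ≤ ∑ d ∈ Finset.Icc (1:ℤ) (W:ℤ), ((d - k).toNat : ℤ) :=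
  Finset.sum_nonneg (fun d _ => by positivity)

lemma upper_barrier (ξ:ℤ) (r W:ℕ) (hW : 1 ≤ W) (x : ↥(bandBall ξ r W)) :
    (if (x:ℤ) = ξ then (1:ℝ) else 0)
      ≤ (bandMat ξ r W).mulVec
          (fun y : ↥(bandBall ξ r W) =>
            ((W:ℝ)^2)⁻¹ * (((W:ℤ) + ((r*W:ℕ):ℤ) - |(y:ℤ) - ξ| : ℤ) : ℝ)) x := by
  classical
  set n : ℤ := ((r*W:ℕ):ℤ) with hn
  set U : ℤ → ℝ := fun y => ((W:ℝ)^2)⁻¹ * (((W:ℤ) + n - |y - ξ| : ℤ) : ℝ) with hU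
  set U0 : ℤ → ℝ := fun y => if y ∈ bandBall ξ r W then U y else 0 with hU0
  have hUnn : ∀ y : ℤ, ξ - (n + W) ≤ y → y ≤ ξ + (n + W) → 0 ≤ U y := by
    intro y h1 h2
    rw [hU]
    have : (0:ℤ) ≤ (W:ℤ) + n - |y - ξ| := by
      rw [Int.abs_eq_natAbs]; omega
    have hc : (0:ℝ) ≤ (((W:ℤ) + n - |y - ξ| : ℤ) : ℝ) := by exact_mod_cast this
    positivity
  have hfun : (fun y : ↥(bandBall ξ r W) => U ↑y) = (fun y : ↥(bandBall ξ r W) => U0 ↑y) := by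
    funext y
    rw [hU0]
    simp only [if_pos y.2]
  rw [hfun, mulVec_core ξ r W U0 (fun y hy => by rw [hU0]; simp only [if_neg hy])]
  have hxm : ξ - n ≤ (x:ℤ) ∧ (x:ℤ) ≤ ξ + n := mem_ball_iff.1 x.2
  have hstep : ∑ d ∈ Finset.Icc (1:ℤ) (W:ℤ), (U0 ((x:ℤ)+d) + U0 ((x:ℤ)-d))
      ≤ ∑ d ∈ Finset.Icc (1:ℤ) (W:ℤ), (U ((x:ℤ)+d) + U ((x:ℤ)-d)) := by
    apply Finset.sum_le_sum
    intro d hd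
    rw [Finset.mem_Icc] at hd
    have hp : U0 ((x:ℤ)+d) ≤ U ((x:ℤ)+d) := by
      simp only [hU0]; split_ifs with h
      · exact le_refl _
      · exact hUnn _ (by omega) (by omega)
    have hm : U0 ((x:ℤ)-d) ≤ U ((x:ℤ)-d) := by
      simp only [hU0]; split_ifs with h
      · exact le_refl _
      · exact hUnn _ (by omega) (by omega)
    linarith
  have hU0x : U0 (x:ℤ) = U (x:ℤ) := by rw [hU0]; simp only [if_pos x.2]
  rw [hU0x]
  have hcards : (Finset.Icc (1:ℤ) (W:ℤ)).card = W := by rw [Int.card_Icc]; omega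
  have hW2pos : (0:ℝ) < (W:ℝ)^2 := by
    have : (0:ℝ) < (W:ℝ) := by exact_mod_cast hW
    positivity
  have hmain : (if (x:ℤ) = ξ then (1:ℝ) else 0)
      ≤ 2*(W:ℝ) * U (x:ℤ) - ∑ d ∈ Finset.Icc (1:ℤ) (W:ℤ), (U ((x:ℤ)+d) + U ((x:ℤ)-d)) := by
    have eq1 : ∑ d ∈ Finset.Icc (1:ℤ) (W:ℤ), (2*U ((x:ℤ)) - (U ((x:ℤ)+d) + U ((x:ℤ)-d)))
        = 2*(W:ℝ) * U (x:ℤ) - ∑ d ∈ Finset.Icc (1:ℤ) (W:ℤ), (U ((x:ℤ)+d) + U ((x:ℤ)-d)) := by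
      rw [Finset.sum_sub_distrib, Finset.sum_const, hcards, nsmul_eq_mul]
      ring
    have e2 : ∀ d ∈ Finset.Icc (1:ℤ) (W:ℤ),
        2*U ((x:ℤ)) - (U ((x:ℤ)+d) + U ((x:ℤ)-d))
          = ((W:ℝ)^2)⁻¹ * ((|(x:ℤ) - ξ + d| + |(x:ℤ) - ξ - d| - 2*|(x:ℤ) - ξ| : ℤ) : ℝ) := by
      intro d _
      rw [hU]
      simp only
      rw [show (x:ℤ)+d-ξ = (x:ℤ)-ξ+d from by ring, show (x:ℤ)-d-ξ = (x:ℤ)-ξ-d from by ring]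
      push_cast
      ring
    rw [← eq1, Finset.sum_congr rfl e2, ← Finset.mul_sum, ← Int.cast_sum]
    by_cases hxc : (x:ℤ) = ξ
    · rw [if_pos hxc]
      have hz : |(x:ℤ) - ξ| = 0 := by rw [hxc]; simp
      rw [sumD W ((x:ℤ) - ξ), hz]
      simp only [sub_zero]
      have hint : ((W:ℤ))^2 ≤ 2 * ∑ d ∈ Finset.Icc (1:ℤ) (W:ℤ), (d.toNat : ℤ) := by
        rw [sumT_center W]; nlinarith [hW]
      rw [inv_mul_eq_div, le_div_iff₀ hW2pos, one_mul]
      calc (W:ℝ)^2 = (((W:ℤ)^2 : ℤ) : ℝ) := by push_cast; ring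
        _ ≤ _ := by exact_mod_cast hint
    · rw [if_neg hxc]
      apply mul_nonneg (by positivity)
      rw [sumD W ((x:ℤ) - ξ)]
      have := sumT_nonneg W (|(x:ℤ) - ξ|)
      exact_mod_cast (by linarith : (0:ℤ) ≤ 2 * ∑ d ∈ Finset.Icc (1:ℤ) (W:ℤ), ((d - |(x:ℤ) - ξ|).toNat : ℤ))
  linarith [hstep, hmain]


lemma lower_barrier (ξ:ℤ) (r W:ℕ) (hW : 1 ≤ W) (x : ↥(bandBall ξ r W)) :
    (bandMat ξ r W).mulVec
        (fun y : ↥(bandBall ξ r W) =>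
          (2*(W:ℝ)^3)⁻¹ * ((((r*W:ℕ):ℤ) + 1 - |(y:ℤ) - ξ| : ℤ) : ℝ)
            + (if (y:ℤ) = ξ then (2*(W:ℝ)^3)⁻¹ * (((W:ℤ)^2 - (W:ℤ) : ℤ) : ℝ) else 0)) x
      ≤ (if (x:ℤ) = ξ then (1:ℝ) else 0) := by
  classical
  have hWR : (1:ℝ) ≤ (W:ℝ) := by exact_mod_cast hW
  have hc3 : (0:ℝ) < 2*(W:ℝ)^3 := by positivity
  set n : ℤ := ((r*W:ℕ):ℤ) with hn
  set c : ℝ := (2*(W:ℝ)^3)⁻¹ with hcdef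
  have hcnn : 0 ≤ c := by rw [hcdef]; positivity
  set sp : ℤ → ℝ := fun y => if y = ξ then c * (((W:ℤ)^2 - (W:ℤ) : ℤ) : ℝ) else 0 with hsp
  set V : ℤ → ℝ := fun y => c * ((n + 1 - |y - ξ| : ℤ) : ℝ) + sp y with hV
  set V0 : ℤ → ℝ := fun y => if y ∈ bandBall ξ r W then V y else 0 with hV0
  have hξB : ξ ∈ bandBall ξ r W := (bandCtr ξ r W).2
  have hVout : ∀ y : ℤ, y ∉ bandBall ξ r W → V y ≤ 0 := by
    intro y hy
    have hyn : ¬ (ξ - n ≤ y ∧ y ≤ ξ + n) := by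
      intro hcon; exact hy (mem_ball_iff.2 hcon)
    have h1 : (n + 1 - |y - ξ| : ℤ) ≤ 0 := by rw [Int.abs_eq_natAbs]; omega
    have h1' : ((n + 1 - |y - ξ| : ℤ) : ℝ) ≤ 0 := by exact_mod_cast h1
    have h2 : sp y = 0 := by
      rw [hsp]
      simp only [if_neg (show ¬ y = ξ from fun h => hy (by rw [h]; exact hξB))]
    simp only [hV, h2, add_zero]
    exact mul_nonpos_of_nonneg_of_nonpos hcnn h1'
  have hge : ∀ y : ℤ, V y ≤ V0 y := by
    intro y
    simp only [hV0]
    split_ifs with h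
    · exact le_refl _
    · exact hVout y h
  have hfun : (fun y : ↥(bandBall ξ r W) =>
          (2*(W:ℝ)^3)⁻¹ * ((((r*W:ℕ):ℤ) + 1 - |(y:ℤ) - ξ| : ℤ) : ℝ)
            + (if (y:ℤ) = ξ then (2*(W:ℝ)^3)⁻¹ * (((W:ℤ)^2 - (W:ℤ) : ℤ) : ℝ) else 0))
      = (fun y : ↥(bandBall ξ r W) => V0 ↑y) := by
    funext y
    simp only [hV0, if_pos y.2, hV, hsp, hcdef, hn]
  rw [hfun, mulVec_core ξ r W V0 (fun y hy => by simp only [hV0, if_neg hy])]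
  have hxm : ξ - n ≤ (x:ℤ) ∧ (x:ℤ) ≤ ξ + n := mem_ball_iff.1 x.2
  have hcards : (Finset.Icc (1:ℤ) (W:ℤ)).card = W := by rw [Int.card_Icc]; omega
  have hV0x : V0 (x:ℤ) = V (x:ℤ) := by simp only [hV0, if_pos x.2]
  rw [hV0x]
  have hstep : ∑ d ∈ Finset.Icc (1:ℤ) (W:ℤ), (V ((x:ℤ)+d) + V ((x:ℤ)-d))
      ≤ ∑ d ∈ Finset.Icc (1:ℤ) (W:ℤ), (V0 ((x:ℤ)+d) + V0 ((x:ℤ)-d)) := by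
    apply Finset.sum_le_sum
    intro d _
    have h1 := hge ((x:ℤ)+d)
    have h2 := hge ((x:ℤ)-d)
    linarith
  have eq1 : ∑ d ∈ Finset.Icc (1:ℤ) (W:ℤ), (2*V ((x:ℤ)) - (V ((x:ℤ)+d) + V ((x:ℤ)-d)))
      = 2*(W:ℝ) * V (x:ℤ) - ∑ d ∈ Finset.Icc (1:ℤ) (W:ℤ), (V ((x:ℤ)+d) + V ((x:ℤ)-d)) := by
    rw [Finset.sum_sub_distrib, Finset.sum_const, hcards, nsmul_eq_mul]
    ring
  have e2 : ∀ d ∈ Finset.Icc (1:ℤ) (W:ℤ),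
      2*V ((x:ℤ)) - (V ((x:ℤ)+d) + V ((x:ℤ)-d))
        = c * ((|(x:ℤ) - ξ + d| + |(x:ℤ) - ξ - d| - 2*|(x:ℤ) - ξ| : ℤ) : ℝ)
          + (2 * sp ((x:ℤ)) - sp ((x:ℤ)+d) - sp ((x:ℤ)-d)) := by
    intro d _
    simp only [hV]
    rw [show (x:ℤ)+d-ξ = (x:ℤ)-ξ+d from by ring, show (x:ℤ)-d-ξ = (x:ℤ)-ξ-d from by ring]
    push_cast
    ring
  have hsum2 : ∑ d ∈ Finset.Icc (1:ℤ) (W:ℤ),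
        (c * ((|(x:ℤ) - ξ + d| + |(x:ℤ) - ξ - d| - 2*|(x:ℤ) - ξ| : ℤ) : ℝ)
          + (2 * sp ((x:ℤ)) - sp ((x:ℤ)+d) - sp ((x:ℤ)-d)))
      = c * ((∑ d ∈ Finset.Icc (1:ℤ) (W:ℤ),
            (|(x:ℤ) - ξ + d| + |(x:ℤ) - ξ - d| - 2*|(x:ℤ) - ξ|) : ℤ) : ℝ)
        + (2*(W:ℝ) * sp ((x:ℤ))
            - (if ξ - (x:ℤ) ∈ Finset.Icc (1:ℤ) (W:ℤ) then c * (((W:ℤ)^2 - (W:ℤ) : ℤ) : ℝ) else 0)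
            - (if (x:ℤ) - ξ ∈ Finset.Icc (1:ℤ) (W:ℤ) then c * (((W:ℤ)^2 - (W:ℤ) : ℤ) : ℝ) else 0)) := by
    rw [Finset.sum_add_distrib]
    congr 1
    · rw [← Finset.mul_sum, ← Int.cast_sum]
    · rw [Finset.sum_sub_distrib, Finset.sum_sub_distrib, Finset.sum_const, hcards,
        nsmul_eq_mul]
      congr 1
      · congr 1
        · ring
        · have hcong : ∀ d ∈ Finset.Icc (1:ℤ) (W:ℤ),
              sp ((x:ℤ)+d) = (if d = ξ - (x:ℤ) then c * (((W:ℤ)^2 - (W:ℤ) : ℤ) : ℝ) else 0) := by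
            intro d _
            simp only [hsp]
            exact if_congr (by omega) rfl rfl
          rw [Finset.sum_congr rfl hcong, Finset.sum_ite_eq']
      · have hcong : ∀ d ∈ Finset.Icc (1:ℤ) (W:ℤ),
            sp ((x:ℤ)-d) = (if d = (x:ℤ) - ξ then c * (((W:ℤ)^2 - (W:ℤ) : ℤ) : ℝ) else 0) := by
          intro d _
          simp only [hsp]
          exact if_congr (by omega) rfl rfl
        rw [Finset.sum_congr rfl hcong, Finset.sum_ite_eq']
  have hmain : 2*(W:ℝ) * V (x:ℤ) - ∑ d ∈ Finset.Icc (1:ℤ) (W:ℤ), (V ((x:ℤ)+d) + V ((x:ℤ)-d))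
      ≤ (if (x:ℤ) = ξ then (1:ℝ) else 0) := by
    rw [← eq1, Finset.sum_congr rfl e2, hsum2, sumD W ((x:ℤ) - ξ)]
    by_cases hxc : (x:ℤ) = ξ
    · rw [if_pos hxc]
      have hz : |(x:ℤ) - ξ| = 0 := by rw [hxc]; simp
      rw [hz]
      simp only [sub_zero]
      have hsx : sp ((x:ℤ)) = c * (((W:ℤ)^2 - (W:ℤ) : ℤ) : ℝ) := by
        simp only [hsp, if_pos hxc]
      have hi1 : ξ - (x:ℤ) ∉ Finset.Icc (1:ℤ) (W:ℤ) := by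
        simp only [Finset.mem_Icc]; omega
      have hi2 : (x:ℤ) - ξ ∉ Finset.Icc (1:ℤ) (W:ℤ) := by
        simp only [Finset.mem_Icc]; omega
      rw [hsx, if_neg hi1, if_neg hi2]
      have hTc := sumT_center W
      have hcast : ((2 * ∑ d ∈ Finset.Icc (1:ℤ) (W:ℤ), (d.toNat : ℤ) : ℤ) : ℝ)
          = (W:ℝ) * ((W:ℝ)+1) := by
        rw [hTc]; push_cast; ring
      rw [hcast]
      have hBc : ((((W:ℤ)^2-(W:ℤ)) : ℤ):ℝ) = (W:ℝ)^2 - (W:ℝ) := by push_cast; ring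
      rw [hBc]
      have hc_eq : c * (2*(W:ℝ)^3) = 1 := by
        rw [hcdef]; field_simp
      have h1 : 0 ≤ c * ((W:ℝ)^2 - (W:ℝ)) := mul_nonneg hcnn (by nlinarith)
      nlinarith [hc_eq, h1]
    · rw [if_neg hxc]
      have hsx : sp ((x:ℤ)) = 0 := by simp only [hsp, if_neg hxc]
      rw [hsx, mul_zero]
      have hzpos : 1 ≤ |(x:ℤ) - ξ| := by
        rw [Int.abs_eq_natAbs]; omega
      by_cases habs : |(x:ℤ) - ξ| ≤ (W:ℤ)
      · have hD := sumT_le W (|(x:ℤ) - ξ|) hzpos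
        have hDc : ((2 * ∑ d ∈ Finset.Icc (1:ℤ) (W:ℤ), ((d - |(x:ℤ) - ξ|).toNat : ℤ) : ℤ) : ℝ)
            ≤ (((W:ℤ)^2 - (W:ℤ) : ℤ) : ℝ) := by exact_mod_cast hD
        have hone : (if ξ - (x:ℤ) ∈ Finset.Icc (1:ℤ) (W:ℤ) then c * (((W:ℤ)^2 - (W:ℤ) : ℤ) : ℝ) else 0)
            + (if (x:ℤ) - ξ ∈ Finset.Icc (1:ℤ) (W:ℤ) then c * (((W:ℤ)^2 - (W:ℤ) : ℤ) : ℝ) else 0)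
            = c * (((W:ℤ)^2 - (W:ℤ) : ℤ) : ℝ) := by
          rcases lt_or_gt_of_ne (fun h : (x:ℤ) = ξ => hxc h) with h | h
          · rw [if_pos (by simp only [Finset.mem_Icc]; rw [Int.abs_eq_natAbs] at habs; omega),
              if_neg (by simp only [Finset.mem_Icc]; omega), add_zero]
          · rw [if_neg (by simp only [Finset.mem_Icc]; omega),
              if_pos (by simp only [Finset.mem_Icc]; rw [Int.abs_eq_natAbs] at habs; omega), zero_add]
        have hmono := mul_le_mul_of_nonneg_left hDc hcnn
        linarith [hone, hmono]
      · have hD0 := sumT_zero W (|(x:ℤ) - ξ|) (by omega)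
        have hi1 : ξ - (x:ℤ) ∉ Finset.Icc (1:ℤ) (W:ℤ) := by
          simp only [Finset.mem_Icc]
          rw [Int.abs_eq_natAbs] at habs; omega
        have hi2 : (x:ℤ) - ξ ∉ Finset.Icc (1:ℤ) (W:ℤ) := by
          simp only [Finset.mem_Icc]
          rw [Int.abs_eq_natAbs] at habs; omega
        rw [if_neg hi1, if_neg hi2, hD0]
        simp
  linarith [hstep, hmain]


/-- **Green's function bounds for the 1D band model** (first part of Lemma B.1):
`-Δ_W^{B_r}` is symmetric positive definite and its inverse `G_r` satisfies
`(2W³)⁻¹ (rW + 1 - |x-ξ|) ≤ G_r(ξ,x) ≤ W⁻² (W + rW - |x-ξ|)` for `x ∈ B_r(ξ)`. -/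
theorem band1d_green (W r : ℕ) (hW : 1 ≤ W) (hr : 1 ≤ r) (ξ : ℤ) :
    (bandMat ξ r W).PosDef ∧
      ∀ x : (bandBall ξ r W : Finset ℤ),
        1 / (2 * (W : ℝ) ^ 3) * ((r * W : ℕ) + 1 - (|(x : ℤ) - ξ| : ℤ)) ≤
            (bandMat ξ r W)⁻¹ (bandCtr ξ r W) x ∧
          (bandMat ξ r W)⁻¹ (bandCtr ξ r W) x ≤
            1 / (W : ℝ) ^ 2 * ((W : ℝ) + (r * W : ℕ) - (|(x : ℤ) - ξ| : ℤ)) := by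
  classical
  have hpd := bandMat_posDef ξ r W hW hr
  refine ⟨hpd, ?_⟩
  have hdet : IsUnit (bandMat ξ r W).det := hpd.det_pos.ne'.isUnit
  have hinv : (bandMat ξ r W)⁻¹ * (bandMat ξ r W) = 1 := Matrix.nonsing_inv_mul _ hdet
  set g : ↥(bandBall ξ r W) → ℝ := fun y => (bandMat ξ r W)⁻¹ (bandCtr ξ r W) y with hg
  have hmvg : ∀ x, (bandMat ξ r W).mulVec g x = (if (x:ℤ) = ξ then (1:ℝ) else 0) := by
    intro x
    have h1 : (bandMat ξ r W).mulVec g x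
        = ∑ y, bandMat ξ r W x y * (bandMat ξ r W)⁻¹ (bandCtr ξ r W) y := rfl
    have h2 : ((bandMat ξ r W)⁻¹ * bandMat ξ r W) (bandCtr ξ r W) x
        = ∑ y, (bandMat ξ r W)⁻¹ (bandCtr ξ r W) y * bandMat ξ r W y x := Matrix.mul_apply
    have h3 : ∑ y, bandMat ξ r W x y * (bandMat ξ r W)⁻¹ (bandCtr ξ r W) y
        = ∑ y, (bandMat ξ r W)⁻¹ (bandCtr ξ r W) y * bandMat ξ r W y x := by
      apply Finset.sum_congr rfl
      intro y _
      rw [mul_comm, bandMat_symm ξ r W x y]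
    rw [h1, h3, ← h2, hinv, Matrix.one_apply]
    have hiff : (bandCtr ξ r W = x) ↔ ((x:ℤ) = ξ) := by
      rw [Subtype.ext_iff]
      exact eq_comm
    exact if_congr hiff rfl rfl
  -- upper bound
  have hup : ∀ x : ↥(bandBall ξ r W), g x ≤
      ((W:ℝ)^2)⁻¹ * (((W:ℤ) + ((r*W:ℕ):ℤ) - |(x:ℤ) - ξ| : ℤ) : ℝ) := by
    have hmp := maximum_principle ξ r W hW
      ((fun y : ↥(bandBall ξ r W) =>
        ((W:ℝ)^2)⁻¹ * (((W:ℤ) + ((r*W:ℕ):ℤ) - |(y:ℤ) - ξ| : ℤ) : ℝ)) - g) ?_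
    · intro x
      have := hmp x
      simp only [Pi.sub_apply] at this
      linarith
    · intro x
      rw [Matrix.mulVec_sub]
      simp only [Pi.sub_apply]
      have h1 := upper_barrier ξ r W hW x
      rw [hmvg x]
      linarith
  -- lower bound
  have hlo : ∀ x : ↥(bandBall ξ r W),
      (2*(W:ℝ)^3)⁻¹ * ((((r*W:ℕ):ℤ) + 1 - |(x:ℤ) - ξ| : ℤ) : ℝ)
        + (if (x:ℤ) = ξ then (2*(W:ℝ)^3)⁻¹ * (((W:ℤ)^2 - (W:ℤ) : ℤ) : ℝ) else 0) ≤ g x := by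
    have hmp := maximum_principle ξ r W hW
      (g - (fun y : ↥(bandBall ξ r W) =>
        (2*(W:ℝ)^3)⁻¹ * ((((r*W:ℕ):ℤ) + 1 - |(y:ℤ) - ξ| : ℤ) : ℝ)
          + (if (y:ℤ) = ξ then (2*(W:ℝ)^3)⁻¹ * (((W:ℤ)^2 - (W:ℤ) : ℤ) : ℝ) else 0))) ?_
    · intro x
      have := hmp x
      simp only [Pi.sub_apply] at this
      linarith
    · intro x
      rw [Matrix.mulVec_sub]
      simp only [Pi.sub_apply]
      have h1 := lower_barrier ξ r W hW x
      rw [hmvg x]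
      linarith
  intro x
  have hWR : (1:ℝ) ≤ (W:ℝ) := by exact_mod_cast hW
  constructor
  · have h1 := hlo x
    have hsp : 0 ≤ (if (x:ℤ) = ξ then (2*(W:ℝ)^3)⁻¹ * (((W:ℤ)^2 - (W:ℤ) : ℤ) : ℝ) else 0) := by
      split_ifs
      · apply mul_nonneg (by positivity)
        have : (0:ℤ) ≤ (W:ℤ)^2 - (W:ℤ) := by nlinarith [(by exact_mod_cast hW : (1:ℤ) ≤ (W:ℤ))]
        exact_mod_cast this
      · exact le_refl _
    have heq : 1 / (2 * (W : ℝ) ^ 3) * ((r * W : ℕ) + 1 - (|(x : ℤ) - ξ| : ℤ))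
        = (2*(W:ℝ)^3)⁻¹ * ((((r*W:ℕ):ℤ) + 1 - |(x:ℤ) - ξ| : ℤ) : ℝ) := by
      push_cast
      ring
    rw [heq]
    linarith
  · have h1 := hup x
    have heq : 1 / (W : ℝ) ^ 2 * ((W : ℝ) + (r * W : ℕ) - (|(x : ℤ) - ξ| : ℤ))
        = ((W:ℝ)^2)⁻¹ * (((W:ℤ) + ((r*W:ℕ):ℤ) - |(x:ℤ) - ξ| : ℤ) : ℝ) := by
      push_cast
      ring
    rw [heq]
    exact h1

end Band1D
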